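/- Let f be ρ-weakly convex on a closed convex set X and t ∈ (0, 1/ρ). Then the proximal map prox_t(x) = argmin_{y ∈ X} [f(y) + (1/(2t))||y - x||^2] is (1/(1 - tρ))-Lipschitz: ||prox_t(u) - prox_t(v)|| ≤ ||u - v||/(1 - tρ) for all u, v ∈ X. -/

import Mathlib

/-- A minimizer of an `m`-strongly convex function on a convex set satisfies a
quadratic growth inequality. -/
lemma strong_min_growth {E : Type*} [NormedAddCommGroup E] [NormedSpace ℝ E]
    {X : Set E} {m : ℝ} (hm : 0 < m) {g : E → ℝ}
    (hg : UniformConvexOn X (fun r => m / 2 * r ^ 2) g) {q : E} (hq : q ∈ X)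
    (hmin : IsMinOn g X q) {y : E} (hy : y ∈ X) :
    g q + m / 2 * ‖y - q‖ ^ 2 ≤ g y := by
  rcases eq_or_ne y q with rfl | hne
  · simp
  have hd0 : 0 < ‖y - q‖ := norm_sub_pos_iff.mpr hne
  have hd : 0 < ‖y - q‖ ^ 2 := by positivity
  -- key inequality for every θ ∈ (0,1)
  have key : ∀ θ : ℝ, 0 < θ → θ < 1 →
      g q + (1 - θ) * (m / 2 * ‖y - q‖ ^ 2) ≤ g y := by
    intro θ h0 h1
    have h1' : (0:ℝ) ≤ 1 - θ := by linarith
    have hmem : θ • y + (1 - θ) • q ∈ X := hg.1 hy hq h0.le h1' (by ring)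
    have hcx := hg.2 hy hq h0.le h1' (by ring)
    have hmin' := hmin hmem
    simp only [smul_eq_mul, Set.mem_setOf_eq] at hcx hmin'
    have : θ * (g q + (1 - θ) * (m / 2 * ‖y - q‖ ^ 2)) ≤ θ * g y := by nlinarith
    exact le_of_mul_le_mul_left this h0
  refine le_of_forall_pos_le_add fun ε hε => ?_
  set C := m / 2 * ‖y - q‖ ^ 2 with hC
  have hCpos : 0 < C := by positivity
  set θ : ℝ := min (1/2) (ε / C) with hθ
  have hθ0 : 0 < θ := lt_min (by norm_num) (div_pos hε hCpos)
  have hθ1 : θ < 1 := lt_of_le_of_lt (min_le_left _ _) (by norm_num)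
  have hθε : θ * C ≤ ε := by
    have h : θ ≤ ε / C := min_le_right _ _
    calc θ * C ≤ (ε / C) * C := by nlinarith
    _ = ε := by field_simp
  have := key θ hθ0 hθ1
  nlinarith

/-- The proximal map of a ρ-weakly convex function with parameter `t < 1/ρ` is
`1/(1 - tρ)`-Lipschitz. -/
theorem prox_lipschitz (n : ℕ) (ρ t : ℝ) (hρ : 0 < ρ) (ht : 0 < t) (ht1 : t < 1 / ρ)
    (X : Set (EuclideanSpace ℝ (Fin n))) (hXc : IsClosed X) (hXv : Convex ℝ X)
    (f : EuclideanSpace ℝ (Fin n) → ℝ)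
    (hwc : ConvexOn ℝ Set.univ (fun x => f x + ρ / 2 * ‖x‖ ^ 2))
    (p : EuclideanSpace ℝ (Fin n) → EuclideanSpace ℝ (Fin n))
    (hpX : ∀ x, p x ∈ X)
    (hpmin : ∀ x, IsMinOn (fun y => f y + 1 / (2 * t) * ‖y - x‖ ^ 2) X (p x))
    (u v : EuclideanSpace ℝ (Fin n)) (hu : u ∈ X) (hv : v ∈ X) :
    ‖p u - p v‖ ≤ ‖u - v‖ / (1 - t * ρ) := by
  have htρ : t * ρ < 1 := by
    rw [lt_div_iff₀ hρ] at ht1; linarith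
  set μ : ℝ := 1 / t - ρ with hμdef
  have hμ : 0 < μ := by
    have h : ρ < 1 / t := by rw [lt_div_iff₀ ht]; nlinarith
    simpa [hμdef] using sub_pos.mpr h
  -- strong convexity of each objective
  have hsc : ∀ x : EuclideanSpace ℝ (Fin n),
      UniformConvexOn X (fun r => μ / 2 * r ^ 2)
        (fun y => f y + 1 / (2 * t) * ‖y - x‖ ^ 2) := by
    intro x
    have h : StrongConvexOn X μ (fun y => f y + 1 / (2 * t) * ‖y - x‖ ^ 2) := by
      rw [strongConvexOn_iff_convex]
      have heq : (fun y : EuclideanSpace ℝ (Fin n) =>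
          (f y + 1 / (2 * t) * ‖y - x‖ ^ 2) - μ / 2 * ‖y‖ ^ 2)
          = fun y => (f y + ρ / 2 * ‖y‖ ^ 2) +
              ((inner ℝ y x : ℝ) * (-(1 / t)) + 1 / (2 * t) * ‖x‖ ^ 2) := by
        funext y
        have hn : ‖y - x‖ ^ 2 = ‖y‖ ^ 2 - 2 * (inner ℝ y x : ℝ) + ‖x‖ ^ 2 :=
          norm_sub_sq_real y x
        rw [hn, hμdef]
        field_simp
        ring
      rw [heq]
      refine ConvexOn.add (hwc.subset (Set.subset_univ X) hXv) ?_
      refine ⟨hXv, fun a ha b hb s r hs hr hsr => ?_⟩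
      have hlin : (inner ℝ (s • a + r • b) x : ℝ)
          = s * (inner ℝ a x : ℝ) + r * (inner ℝ b x : ℝ) := by
        rw [inner_add_left, real_inner_smul_left, real_inner_smul_left]
      simp only [smul_eq_mul, hlin]
      apply le_of_eq
      have hr1 : r = 1 - s := by linarith
      rw [hr1]; ring
    exact h
  -- growth inequalities at the two minimizers
  have h1 := strong_min_growth hμ (hsc u) (hpX u) (hpmin u) (hpX v)
  have h2 := strong_min_growth hμ (hsc v) (hpX v) (hpmin v) (hpX u)
  -- expand inner ℝ products
  have e1 : ‖p v - u‖ ^ 2 = ‖p v‖ ^ 2 - 2 * (inner ℝ (p v) u : ℝ) + ‖u‖ ^ 2 :=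
    norm_sub_sq_real (p v) u
  have e2 : ‖p u - u‖ ^ 2 = ‖p u‖ ^ 2 - 2 * (inner ℝ (p u) u : ℝ) + ‖u‖ ^ 2 :=
    norm_sub_sq_real (p u) u
  have e3 : ‖p u - v‖ ^ 2 = ‖p u‖ ^ 2 - 2 * (inner ℝ (p u) v : ℝ) + ‖v‖ ^ 2 :=
    norm_sub_sq_real (p u) v
  have e4 : ‖p v - v‖ ^ 2 = ‖p v‖ ^ 2 - 2 * (inner ℝ (p v) v : ℝ) + ‖v‖ ^ 2 :=
    norm_sub_sq_real (p v) v
  have e5 : ‖p v - p u‖ ^ 2 = ‖p u - p v‖ ^ 2 := by rw [norm_sub_rev]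
  rw [e5] at h1
  set Z : ℝ := (inner ℝ (p u - p v) (u - v) : ℝ) with hZ
  have e6 : Z = (inner ℝ (p u) u : ℝ) - (inner ℝ (p u) v : ℝ)
      - (inner ℝ (p v) u : ℝ) + (inner ℝ (p v) v : ℝ) := by
    rw [hZ, inner_sub_left, inner_sub_right, inner_sub_right]; ring
  have hdiff : ‖p v - u‖ ^ 2 - ‖p u - u‖ ^ 2 + ‖p u - v‖ ^ 2 - ‖p v - v‖ ^ 2
      = 2 * Z := by rw [e1, e2, e3, e4, e6]; ring
  have hsum : μ * ‖p u - p v‖ ^ 2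
      ≤ 1 / (2 * t) * (‖p v - u‖ ^ 2 - ‖p u - u‖ ^ 2 + ‖p u - v‖ ^ 2 - ‖p v - v‖ ^ 2) := by
    have expand : 1 / (2 * t) * (‖p v - u‖ ^ 2 - ‖p u - u‖ ^ 2 + ‖p u - v‖ ^ 2 - ‖p v - v‖ ^ 2)
        = 1 / (2 * t) * ‖p v - u‖ ^ 2 - 1 / (2 * t) * ‖p u - u‖ ^ 2
          + 1 / (2 * t) * ‖p u - v‖ ^ 2 - 1 / (2 * t) * ‖p v - v‖ ^ 2 := by ring
    rw [expand]
    linarith [h1, h2]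
  have hcomb : μ * ‖p u - p v‖ ^ 2 ≤ (1 / t) * Z := by
    rw [hdiff] at hsum
    have : 1 / (2 * t) * (2 * Z) = (1 / t) * Z := by
      field_simp
    linarith [hsum, this.le, this.ge]
  have hcs : Z ≤ ‖p u - p v‖ * ‖u - v‖ := real_inner_le_norm _ _
  have h1tρ : 0 < 1 - t * ρ := by linarith
  have hμt : t * μ = 1 - t * ρ := by
    rw [hμdef]; field_simp
  have hkey : (1 - t * ρ) * ‖p u - p v‖ ^ 2 ≤ ‖p u - p v‖ * ‖u - v‖ := by
    have step : t * (μ * ‖p u - p v‖ ^ 2) ≤ t * ((1 / t) * Z) :=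
      mul_le_mul_of_nonneg_left hcomb ht.le
    have ht2 : t * ((1 / t) * Z) = Z := by
      field_simp
    calc (1 - t * ρ) * ‖p u - p v‖ ^ 2 = t * (μ * ‖p u - p v‖ ^ 2) := by rw [← hμt]; ring
      _ ≤ Z := by rw [← ht2]; exact step
      _ ≤ ‖p u - p v‖ * ‖u - v‖ := hcs
  rcases eq_or_lt_of_le (norm_nonneg (p u - p v)) with h0 | h0
  · rw [← h0]; positivity
  · rw [le_div_iff₀ h1tρ]
    clear hsc hpmin hwc h1 h2 e1 e2 e3 e4 e5 e6 hdiff hsum hcomb hcs hZ hμdef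
    nlinarith [hkey, h0]
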